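/- Let Ψ : ℝ × ℝ → ℝ be C² and h : ℝ → ℝ be C¹, and suppose Ψ solves the reduced equation ∂ₜₜΨ − ∂ₓₓΨ + h(Ψ)h'(Ψ) = 0 everywhere. Define F by F_{01} = h(Ψ), F_{02} = ∂ₜΨ, F_{12} = ∂ₓΨ (antisymmetric, other components zero), J^μ = ∂_ν F^{νμ} with indices raised by η = diag(−1,1,1,1), and K = (∂ₓΨ, −∂ₜΨ, h(Ψ), 0). Then the current is proportional to the kernel vector: J^μ = h'(Ψ)·K^μ for all μ at every point. -/

import Mathlib

noncomputable section

/-- `∂ₜΨ`. -/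
def psiT (Ψ : ℝ × ℝ → ℝ) (t x : ℝ) : ℝ := deriv (fun s => Ψ (s, x)) t

/-- `∂ₓΨ`. -/
def psiX (Ψ : ℝ × ℝ → ℝ) (t x : ℝ) : ℝ := deriv (fun s => Ψ (t, s)) x

/-- `∂ₜₜΨ`. -/
def psiTT (Ψ : ℝ × ℝ → ℝ) (t x : ℝ) : ℝ := deriv (fun s => psiT Ψ s x) t

/-- `∂ₓₓΨ`. -/
def psiXX (Ψ : ℝ × ℝ → ℝ) (t x : ℝ) : ℝ := deriv (fun s => psiX Ψ t s) x

/-- The antisymmetric field tensor `F_{μν}` of the ansatz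
`F = dΨ ∧ dy + h(Ψ) dt ∧ dx`, with `F_{01} = h(Ψ)`, `F_{02} = ∂ₜΨ`, `F_{12} = ∂ₓΨ`. -/
def Fdown (Ψ : ℝ × ℝ → ℝ) (h : ℝ → ℝ) (p : Fin 4 → ℝ) : Matrix (Fin 4) (Fin 4) ℝ :=
  !![0, h (Ψ (p 0, p 1)), psiT Ψ (p 0) (p 1), 0;
     -(h (Ψ (p 0, p 1))), 0, psiX Ψ (p 0) (p 1), 0;
     -(psiT Ψ (p 0) (p 1)), -(psiX Ψ (p 0) (p 1)), 0, 0;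
     0, 0, 0, 0]

/-- The Minkowski metric `η = diag(-1,1,1,1)`. -/
def eta : Matrix (Fin 4) (Fin 4) ℝ := Matrix.diagonal ![-1, 1, 1, 1]

/-- `F^{νμ} = η^{να} η^{μβ} F_{αβ}` (indices raised with `η`). -/
def Fup (Ψ : ℝ × ℝ → ℝ) (h : ℝ → ℝ) (p : Fin 4 → ℝ) : Matrix (Fin 4) (Fin 4) ℝ :=
  fun ν μ => ∑ α : Fin 4, ∑ β : Fin 4, eta ν α * eta μ β * Fdown Ψ h p α β

/-- Coordinate partial derivative `∂_ν f` on ℝ⁴. -/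
def pd (ν : Fin 4) (f : (Fin 4 → ℝ) → ℝ) (p : Fin 4 → ℝ) : ℝ :=
  deriv (fun s => f (Function.update p ν s)) (p ν)

/-- The four-current `J^μ = ∂_ν F^{νμ}`. -/
def Jcur (Ψ : ℝ × ℝ → ℝ) (h : ℝ → ℝ) (p : Fin 4 → ℝ) (μ : Fin 4) : ℝ :=
  ∑ ν : Fin 4, pd ν (fun q => Fup Ψ h q ν μ) p

/-- The kernel vector field `K = (∂ₓΨ, −∂ₜΨ, h(Ψ), 0)` on ℝ⁴ (independent of `y,z`). -/
def KF (Ψ : ℝ × ℝ → ℝ) (h : ℝ → ℝ) (p : Fin 4 → ℝ) : Fin 4 → ℝ :=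
  ![psiX Ψ (p 0) (p 1), -(psiT Ψ (p 0) (p 1)), h (Ψ (p 0, p 1)), 0]


lemma Fup_eq (Ψ : ℝ × ℝ → ℝ) (h : ℝ → ℝ) (p : Fin 4 → ℝ) :
    Fup Ψ h p = !![0, -(h (Ψ (p 0, p 1))), -(psiT Ψ (p 0) (p 1)), 0;
      h (Ψ (p 0, p 1)), 0, psiX Ψ (p 0) (p 1), 0;
      psiT Ψ (p 0) (p 1), -(psiX Ψ (p 0) (p 1)), 0, 0;
      0, 0, 0, 0] := by
  ext ν μ
  fin_cases ν <;> fin_cases μ <;>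
    simp [Fup, eta, Fdown, Fin.sum_univ_four, Matrix.diagonal,
      Matrix.vecHead, Matrix.vecTail]

section
variable {Ψ : ℝ × ℝ → ℝ} {h : ℝ → ℝ}

lemma hdT (hΨ : ContDiff ℝ 2 Ψ) (t x : ℝ) :
    HasDerivAt (fun s => Ψ (s, x)) (psiT Ψ t x) t := by
  have : DifferentiableAt ℝ (fun s => Ψ (s, x)) t :=
    ((hΨ.differentiable (by norm_num)).comp
      (differentiable_id.prodMk (differentiable_const x))) t
  exact this.hasDerivAt

lemma hdX (hΨ : ContDiff ℝ 2 Ψ) (t x : ℝ) :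
    HasDerivAt (fun s => Ψ (t, s)) (psiX Ψ t x) x := by
  have : DifferentiableAt ℝ (fun s => Ψ (t, s)) x :=
    ((hΨ.differentiable (by norm_num)).comp
      ((differentiable_const t).prodMk differentiable_id)) x
  exact this.hasDerivAt

lemma dhT (hΨ : ContDiff ℝ 2 Ψ) (hh : ContDiff ℝ 1 h) (t x : ℝ) :
    deriv (fun s => h (Ψ (s, x))) t = deriv h (Ψ (t, x)) * psiT Ψ t x := by
  exact (((hh.differentiable one_ne_zero) _).hasDerivAt.comp t (hdT hΨ t x)).deriv

lemma dhX (hΨ : ContDiff ℝ 2 Ψ) (hh : ContDiff ℝ 1 h) (t x : ℝ) :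
    deriv (fun s => h (Ψ (t, s))) x = deriv h (Ψ (t, x)) * psiX Ψ t x := by
  exact (((hh.differentiable one_ne_zero) _).hasDerivAt.comp x (hdX hΨ t x)).deriv

end

/-- if `Ψ` solves the reduced equation `∂ₜₜΨ − ∂ₓₓΨ + h(Ψ)h'(Ψ) = 0`
everywhere, then the current is proportional to the kernel vector: `J^μ = h'(Ψ)·K^μ`. -/
theorem stmt18 (Ψ : ℝ × ℝ → ℝ) (h : ℝ → ℝ)
    (hΨ : ContDiff ℝ 2 Ψ) (hh : ContDiff ℝ 1 h)
    (heq : ∀ t x : ℝ,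
      psiTT Ψ t x - psiXX Ψ t x + h (Ψ (t, x)) * deriv h (Ψ (t, x)) = 0)
    (p : Fin 4 → ℝ) (μ : Fin 4) :
    Jcur Ψ h p μ = deriv h (Ψ (p 0, p 1)) * KF Ψ h p μ := by

  simp only [Jcur, Fin.sum_univ_four, pd, Fup_eq]
  fin_cases μ <;>
    simp only [KF, Matrix.cons_val_zero, Matrix.cons_val_one, Matrix.head_cons,
      Matrix.cons_val_two, Matrix.tail_cons, Matrix.cons_val_three,
      Matrix.cons_val', Matrix.empty_val', Matrix.cons_val_fin_one,
      Function.update_self, Function.update_of_ne (show (0:Fin 4) ≠ 1 by decide),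
      Function.update_of_ne (show (0:Fin 4) ≠ 2 by decide),
      Function.update_of_ne (show (0:Fin 4) ≠ 3 by decide),
      Function.update_of_ne (show (1:Fin 4) ≠ 0 by decide),
      Function.update_of_ne (show (1:Fin 4) ≠ 2 by decide),
      Function.update_of_ne (show (1:Fin 4) ≠ 3 by decide),
      deriv_const]
  · -- μ = 0
    norm_num [Matrix.cons_val_zero, Matrix.cons_val_one, Matrix.cons_val_two,
      Matrix.cons_val_three, Matrix.head_cons, Matrix.tail_cons, Matrix.vecHead, Matrix.vecTail]
    rw [dhX hΨ hh]
  · norm_num [Matrix.cons_val_zero, Matrix.cons_val_one, Matrix.cons_val_two,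
      Matrix.cons_val_three, Matrix.head_cons, Matrix.tail_cons, Matrix.vecHead, Matrix.vecTail]
    rw [dhT hΨ hh]
  · norm_num [Matrix.cons_val_zero, Matrix.cons_val_one, Matrix.cons_val_two,
      Matrix.cons_val_three, Matrix.head_cons, Matrix.tail_cons, Matrix.vecHead, Matrix.vecTail]
    have := heq (p 0) (p 1)
    simp only [psiTT, psiXX] at this ⊢
    linarith
  · norm_num [Matrix.cons_val_zero, Matrix.cons_val_one, Matrix.cons_val_two,
      Matrix.cons_val_three, Matrix.head_cons, Matrix.tail_cons, Matrix.vecHead, Matrix.vecTail]
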